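/- Let F = F_{q^2} with involution x ↦ x^q, and let H ∈ M_d(F) be a Hermitian matrix of rank d−1. Then there exists a column vector v ∈ F^d such that H − v·v* is invertible. -/

import Mathlib

open Matrix Module

theorem stmt7 (F : Type*) [Field F] [Fintype F] (q d : ℕ)
    (hq : Fintype.card F = q ^ 2) (hd : 0 < d)
    (H : Matrix (Fin d) (Fin d) F) (hH : (H.map (· ^ q))ᵀ = H)
    (hrank : H.rank = d - 1) :
    ∃ v : Fin d → F,
      IsUnit (H - Matrix.of fun i j => v i * (v j) ^ q) := by
  classical
  -- the map x ↦ x ^ q is a ring hom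
  set p := ringChar F with hpd
  haveI : CharP F p := ringChar.charP F
  obtain ⟨n, hp, hcard⟩ := FiniteField.card F p
  have hqdvd : q ∣ p ^ (n : ℕ) := by
    rw [← hcard, hq]; exact dvd_pow_self q two_ne_zero
  obtain ⟨m, hmn, hqm⟩ := (Nat.dvd_prime_pow hp).mp hqdvd
  haveI : ExpChar F p := ExpChar.prime hp
  set φ : F →+* F := iterateFrobenius F p m with hφ
  have hφq : ∀ x : F, φ x = x ^ q := fun x => by
    rw [hφ, iterateFrobenius_def, ← hqm]
  -- Hermitian symmetry, entrywise
  have hsymm : ∀ i k, H k i = (H i k) ^ q := by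
    intro i k
    conv_lhs => rw [← hH]
    simp [Matrix.transpose_apply, Matrix.map_apply]
  -- kernel of H is 1-dimensional
  have hrn := LinearMap.finrank_range_add_finrank_ker H.mulVecLin
  have hfr : finrank F (Fin d → F) = d := by simp
  have hdimker : finrank F (LinearMap.ker H.mulVecLin) = 1 := by
    have : H.rank + finrank F (LinearMap.ker H.mulVecLin) = d := by
      rw [Matrix.rank]; rw [hfr] at hrn; exact hrn
    omega
  -- pick a nonzero kernel vector w
  have hkerbot : LinearMap.ker H.mulVecLin ≠ ⊥ := by
    intro h
    rw [h] at hdimker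
    simp at hdimker
  obtain ⟨w, hwK, hw0⟩ := Submodule.exists_mem_ne_zero_of_ne_bot hkerbot
  -- the kernel is spanned by w
  have hspan : LinearMap.ker H.mulVecLin ≤ Submodule.span F {w} := by
    rw [(Submodule.eq_of_le_of_finrank_le
      ((Submodule.span_singleton_le_iff_mem w _).mpr hwK)
      (by rw [hdimker, finrank_span_singleton hw0])).symm]
  have hHw : H.mulVec w = 0 := hwK
  -- w* H = 0
  have hwH : ∀ i, ∑ k, w k ^ q * H k i = 0 := by
    intro i
    have : ∑ k, w k ^ q * H k i = φ (H.mulVec w i) := by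
      rw [Matrix.mulVec, dotProduct, map_sum]
      refine Finset.sum_congr rfl fun k _ => ?_
      rw [_root_.map_mul, hφq, hφq, hsymm i k, mul_comm]
    rw [this, hHw]
    simp
  -- choose j with w j ≠ 0, take v = e_j
  obtain ⟨j, hj⟩ := Function.ne_iff.mp hw0
  rw [Pi.zero_apply] at hj
  refine ⟨Pi.single j 1, ?_⟩
  rw [← Matrix.mulVec_injective_iff_isUnit]
  set v : Fin d → F := Pi.single j 1 with hv
  set M : Matrix (Fin d) (Fin d) F := H - Matrix.of fun i k => v i * v k ^ q with hM
  have hq0 : q ≠ 0 := by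
    intro h
    rw [h] at hq
    simp at hq
  -- key: M *ᵥ x = 0 → x = 0
  have key : ∀ x : Fin d → F, M.mulVec x = 0 → x = 0 := by
    intro x hx
    have hMx : ∀ i, H.mulVec x i - v i * x j = 0 := by
      intro i
      have : M.mulVec x i = H.mulVec x i - v i * x j := by
        rw [hM, Matrix.sub_mulVec]
        simp only [Pi.sub_apply, Matrix.mulVec, dotProduct, Matrix.of_apply]
        congr 1
        rw [show (∑ k, v i * v k ^ q * x k) = v i * ∑ k, v k ^ q * x k by
          rw [Finset.mul_sum]; exact Finset.sum_congr rfl fun k _ => by ring]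
        congr 1
        rw [Finset.sum_eq_single j]
        · simp [hv]
        · intro k _ hk
          simp [hv, Pi.single_eq_of_ne hk, zero_pow hq0]
        · simp
      rw [← this, hx, Pi.zero_apply]
    have hxj : x j = 0 := by
      have hHx : ∀ i, H.mulVec x i = v i * x j := fun i =>
        sub_eq_zero.mp (hMx i)
      have h1 : ∑ i, w i ^ q * (H.mulVec x i) = w j ^ q * x j := by
        simp_rw [hHx]
        rw [Finset.sum_eq_single j]
        · simp [hv]
        · intro k _ hk
          simp [hv, Pi.single_eq_of_ne hk]
        · simp
      have h2 : ∑ i, w i ^ q * (H.mulVec x i) = 0 := by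
        simp only [Matrix.mulVec, dotProduct, Finset.mul_sum]
        rw [Finset.sum_comm]
        refine Finset.sum_eq_zero fun k _ => ?_
        have := hwH k
        calc ∑ i, w i ^ q * (H i k * x k) = (∑ i, w i ^ q * H i k) * x k := by
              rw [Finset.sum_mul]; exact Finset.sum_congr rfl fun i _ => by ring
          _ = 0 := by rw [this, zero_mul]
      rw [h2] at h1
      have := pow_ne_zero q hj
      field_simp at h1
      exact (mul_eq_zero.mp h1.symm).resolve_left this
    have hxker : x ∈ LinearMap.ker H.mulVecLin := by
      have : H.mulVec x = 0 := by
        funext i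
        have := hMx i
        rw [show v i * x j = 0 by rw [hxj, mul_zero]] at this
        simpa using this
      exact this
    obtain ⟨c, hc⟩ := Submodule.mem_span_singleton.mp (hspan hxker)
    have : c = 0 := by
      have : x j = c * w j := by rw [← hc]; rfl
      rw [hxj] at this
      rcases mul_eq_zero.mp this.symm with h | h
      · exact h
      · exact absurd h hj
    rw [← hc, this, zero_smul]
  intro x y hxy
  have : M.mulVec (x - y) = 0 := by
    rw [Matrix.mulVec_sub, hxy, sub_self]
  have := key _ this
  exact sub_eq_zero.mp this
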